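/- For positive trace-class operators ρ, σ on a finite-dimensional Hilbert space and λ ∈ [0,1], the von Neumann entropy satisfies H(λρ + (1−λ)σ) ≤ λH(ρ) + (1−λ)H(σ) + max{Tr ρ, Tr σ} · h₂(λ), where h₂(λ) = −λ log λ − (1−λ) log(1−λ) is the binary entropy. -/

import Mathlib

open Matrix
open scoped ComplexOrder

noncomputable section

set_option linter.unusedSectionVars false
set_option maxHeartbeats 1000000

section AuxiliaryLemmas
set_option linter.unusedSectionVars false
set_option maxHeartbeats 1000000

lemma jensen_negMulLog {ι : Type*} (s : Finset ι) (w t : ι → ℝ)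
    (hw : ∀ i ∈ s, 0 ≤ w i) (hw1 : ∑ i ∈ s, w i ≤ 1) (ht : ∀ i ∈ s, 0 ≤ t i) :
    ∑ i ∈ s, w i * Real.negMulLog (t i) ≤ Real.negMulLog (∑ i ∈ s, w i * t i) := by
  set S := ∑ i ∈ s, w i with hS
  rcases eq_or_lt_of_le (Finset.sum_nonneg hw) with h0 | hpos
  · have hz : ∀ i ∈ s, w i = 0 := by
      intro i hi
      exact ((Finset.sum_eq_zero_iff_of_nonneg hw).mp h0.symm) i hi
    have l1 : ∑ i ∈ s, w i * Real.negMulLog (t i) = 0 :=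
      Finset.sum_eq_zero fun i hi => by rw [hz i hi, zero_mul]
    have l2 : ∑ i ∈ s, w i * t i = 0 :=
      Finset.sum_eq_zero fun i hi => by rw [hz i hi, zero_mul]
    rw [l1, l2, Real.negMulLog_zero]
  · have hSne : S ≠ 0 := ne_of_gt hpos
    have hjensen := Real.concaveOn_negMulLog.le_map_sum (t := s) (w := fun i => w i / S)
      (p := t) (fun i hi => div_nonneg (hw i hi) hpos.le)
      (by rw [← Finset.sum_div, ← hS, div_self hSne])
      (fun i hi => ht i hi)
    simp only [smul_eq_mul] at hjensen
    have hbar : ∑ i ∈ s, w i / S * t i = (∑ i ∈ s, w i * t i) / S := by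
      rw [Finset.sum_div]; exact Finset.sum_congr rfl fun i _ => by ring
    rw [hbar] at hjensen
    have hbar0 : 0 ≤ (∑ i ∈ s, w i * t i) / S :=
      div_nonneg (Finset.sum_nonneg fun i hi => mul_nonneg (hw i hi) (ht i hi)) hpos.le
    have h2 := Real.concaveOn_negMulLog.2 (Set.mem_Ici.mpr hbar0)
      (Set.mem_Ici.mpr le_rfl) hpos.le (by linarith : (0:ℝ) ≤ 1 - S) (by ring)
    simp only [smul_eq_mul, mul_zero, add_zero, Real.negMulLog_zero] at h2
    have hSS : S * ((∑ i ∈ s, w i * t i) / S) = ∑ i ∈ s, w i * t i := by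
      field_simp
    rw [hSS] at h2
    calc ∑ i ∈ s, w i * Real.negMulLog (t i)
        = S * ∑ i ∈ s, w i / S * Real.negMulLog (t i) := by
          rw [Finset.mul_sum]; exact Finset.sum_congr rfl fun i _ => by field_simp
      _ ≤ S * Real.negMulLog ((∑ i ∈ s, w i * t i) / S) := by
          exact mul_le_mul_of_nonneg_left hjensen hpos.le
      _ ≤ Real.negMulLog (∑ i ∈ s, w i * t i) := by linarith

lemma master {n : Type*} [Fintype n] (t a : n → ℝ) (d : n → n → ℝ)
    (ht : ∀ i, 0 ≤ t i) (ha : ∀ j, 0 ≤ a j) (hd : ∀ i j, 0 ≤ d i j)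
    (H1 : ∀ j, ∑ i, d i j = 1)
    (H2 : ∀ i, ∑ j, a j * d i j ≤ t i)
    (H3 : ∀ j, a j * (∑ i, if 0 < t i then d i j / t i else 0) ≤ 1) :
    ∑ i, (∑ j, a j * d i j) * (- Real.log (t i)) ≤ ∑ j, Real.negMulLog (a j) := by
  have swap : ∑ i, (∑ j, a j * d i j) * (- Real.log (t i))
      = ∑ j, ∑ i, a j * d i j * (- Real.log (t i)) := by
    rw [Finset.sum_comm]
    exact Finset.sum_congr rfl fun i _ => by rw [Finset.sum_mul]
  rw [swap]
  apply Finset.sum_le_sum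
  intro j _
  by_cases haj : a j = 0
  · simp [haj]
  have haj' : 0 < a j := lt_of_le_of_ne (ha j) (Ne.symm haj)
  -- support fact
  have supp : ∀ i, t i = 0 → d i j = 0 := by
    intro i h0
    by_contra hne
    have hdij : 0 < d i j := lt_of_le_of_ne (hd i j) (Ne.symm hne)
    have hle : a j * d i j ≤ ∑ j', a j' * d i j' :=
      Finset.single_le_sum (fun j' _ => mul_nonneg (ha j') (hd i j')) (Finset.mem_univ j)
    have := (hle.trans (H2 i)).trans_eq h0
    nlinarith
  set w : n → ℝ := fun i => if 0 < t i then a j * d i j / t i else 0 with hw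
  have hw0 : ∀ i ∈ Finset.univ (α := n), 0 ≤ w i := by
    intro i _
    simp only [hw]
    split
    · exact div_nonneg (mul_nonneg (ha j) (hd i j)) (ht i)
    · exact le_rfl
  have hw1 : ∑ i, w i ≤ 1 := by
    have : ∀ i, w i = a j * (if 0 < t i then d i j / t i else 0) := by
      intro i; simp only [hw]; split <;> ring
    rw [Finset.sum_congr rfl fun i _ => this i, ← Finset.mul_sum]
    exact H3 j
  have hwt : ∀ i, w i * t i = a j * d i j := by
    intro i
    simp only [hw]
    split
    · rename_i hpos
      field_simp
    · rename_i hneg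
      have h0 : t i = 0 := le_antisymm (not_lt.mp hneg) (ht i)
      rw [supp i h0]; ring
  have hsum : ∑ i, w i * t i = a j := by
    rw [Finset.sum_congr rfl fun i _ => hwt i, ← Finset.mul_sum, H1 j, mul_one]
  have hterm : ∀ i, a j * d i j * (- Real.log (t i)) = w i * Real.negMulLog (t i) := by
    intro i
    simp only [hw]
    split
    · rename_i hpos
      rw [Real.negMulLog]
      field_simp
    · rename_i hneg
      have h0 : t i = 0 := le_antisymm (not_lt.mp hneg) (ht i)
      rw [supp i h0]; ring_nf
  calc ∑ i, a j * d i j * (- Real.log (t i)) = ∑ i, w i * Real.negMulLog (t i) :=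
        Finset.sum_congr rfl fun i _ => hterm i
    _ ≤ Real.negMulLog (∑ i, w i * t i) :=
        jensen_negMulLog _ _ _ hw0 hw1 (fun i _ => ht i)
    _ = Real.negMulLog (a j) := by rw [hsum]
set_option linter.unusedSectionVars false
variable {n : Type*} [Fintype n] [DecidableEq n]

lemma psd_add {A B : Matrix n n ℂ} (hA : A.PosSemidef) (hB : B.PosSemidef) :
    (A + B).PosSemidef := by
  exact hA.add hB

lemma psd_smul {A : Matrix n n ℂ} (hA : A.PosSemidef) {c : ℝ} (hc : 0 ≤ c) :
    (c • A).PosSemidef := by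
  exact hA.smul hc

-- quadratic form transform
lemma quad_transform (M B : Matrix n n ℂ) (w : n → ℂ) :
    star w ⬝ᵥ ((Bᴴ * M * B) *ᵥ w) = star (B *ᵥ w) ⬝ᵥ (M *ᵥ (B *ᵥ w)) := by
  simp only [star_mulVec, dotProduct_mulVec, vecMul_vecMul, star_eq_conjTranspose]

lemma quad_diag (f : n → ℂ) (v : n → ℂ) :
    star v ⬝ᵥ (diagonal f *ᵥ v) = ∑ i, f i * (Complex.normSq (v i) : ℂ) := by
  simp only [dotProduct, mulVec_diagonal, Pi.star_apply]
  refine Finset.sum_congr rfl fun i _ => ?_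
  rw [Complex.star_def, ← Complex.mul_conj (v i)]
  ring

lemma diag_entry_rot (W : Matrix n n ℂ) (a : n → ℝ) (i : n) :
    (W * diagonal (fun j => (a j : ℂ)) * Wᴴ) i i
      = ((∑ j, a j * Complex.normSq (W i j) : ℝ) : ℂ) := by
  rw [Matrix.mul_apply]
  push_cast
  refine Finset.sum_congr rfl fun j _ => ?_
  rw [Matrix.mul_diagonal, Matrix.conjTranspose_apply, Complex.star_def,
    ← Complex.mul_conj (W i j)]
  push_cast
  ring

lemma quad_rot (W : Matrix n n ℂ) (a : n → ℝ) (w : n → ℂ) :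
    star w ⬝ᵥ ((W * diagonal (fun j => (a j : ℂ)) * Wᴴ) *ᵥ w)
      = ∑ j, (a j : ℂ) * (Complex.normSq ((Wᴴ *ᵥ w) j) : ℂ) := by
  have h : W * diagonal (fun j => (a j : ℂ)) * Wᴴ
      = (Wᴴ)ᴴ * diagonal (fun j => (a j : ℂ)) * Wᴴ := by rw [conjTranspose_conjTranspose]
  rw [h, quad_transform, quad_diag]

lemma psd_diag_entry_re_nonneg {M : Matrix n n ℂ} (hM : M.PosSemidef) (i : n) :
    0 ≤ (M i i).re := by
  have := hM.re_dotProduct_nonneg (Pi.single i 1)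
  have hval : star (Pi.single i 1 : n → ℂ) ⬝ᵥ (M *ᵥ Pi.single i 1) = M i i := by
    simp [dotProduct, Pi.single_apply, mulVec_single]
  rw [hval] at this
  exact this

lemma trace_eq_sum_eigen {A : Matrix n n ℂ} (hA : A.IsHermitian) :
    A.trace = ((∑ i, hA.eigenvalues i : ℝ) : ℂ) := by
  rw [hA.trace_eq_sum_eigenvalues]
  push_cast
  rfl

lemma KL {ρ T : Matrix n n ℂ} (hρ : ρ.PosSemidef) (hT : T.PosSemidef)
    {c : ℝ} (hc : 0 ≤ c) (hle : (T - c • ρ).PosSemidef) :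
    ∑ i, c * ((star (hT.1.eigenvectorUnitary : Matrix n n ℂ) * ρ
          * (hT.1.eigenvectorUnitary : Matrix n n ℂ)) i i).re
        * (- Real.log (hT.1.eigenvalues i))
      ≤ ∑ j, Real.negMulLog (c * hρ.1.eigenvalues j) := by
  set U : Matrix n n ℂ := (hT.1.eigenvectorUnitary : Matrix n n ℂ) with hU
  set V : Matrix n n ℂ := (hρ.1.eigenvectorUnitary : Matrix n n ℂ) with hV
  set W : Matrix n n ℂ := star U * V with hW
  set t : n → ℝ := hT.1.eigenvalues with htdef
  set a : n → ℝ := hρ.1.eigenvalues with hadef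
  set d : n → n → ℝ := fun i j => Complex.normSq (W i j) with hd
  have hUU : U * star U = 1 := Matrix.mem_unitaryGroup_iff.mp hT.1.eigenvectorUnitary.2
  have hUU' : star U * U = 1 := Matrix.mem_unitaryGroup_iff'.mp hT.1.eigenvectorUnitary.2
  have hVV : V * star V = 1 := Matrix.mem_unitaryGroup_iff.mp hρ.1.eigenvectorUnitary.2
  have hVV' : star V * V = 1 := Matrix.mem_unitaryGroup_iff'.mp hρ.1.eigenvectorUnitary.2
  -- rotated matrices
  have hDt : star U * T * U = diagonal (fun i => (t i : ℂ)) := by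
    have := hT.1.spectral_theorem
    rw [Unitary.conjStarAlgAut_apply, ← hU] at this
    have hUU' : star U * U = 1 := Matrix.mem_unitaryGroup_iff'.mp hT.1.eigenvectorUnitary.2
    conv_lhs => rw [this]
    simp only [Matrix.mul_assoc, hUU', Matrix.mul_one]
    rw [← Matrix.mul_assoc, hUU', Matrix.one_mul]
    rfl
  have hPρ : star U * ρ * U = W * diagonal (fun j => (a j : ℂ)) * Wᴴ := by
    have hspec : ρ = V * diagonal (fun j => (a j : ℂ)) * star V := by
      have := hρ.1.spectral_theorem
      rw [Unitary.conjStarAlgAut_apply, ← hV] at this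
      exact this
    have hWs : Wᴴ = star V * U := by
      rw [hW, ← Matrix.star_eq_conjTranspose, StarMul.star_mul, star_star]
    rw [hspec, hW, hWs]
    simp only [Matrix.mul_assoc]
  -- the rotated PSD hypothesis
  have hrot : (star U * (T - c • ρ) * U).PosSemidef := by
    rw [Matrix.star_eq_conjTranspose]
    exact hle.conjTranspose_mul_mul_same U
  have hsplit : star U * (T - c • ρ) * U
      = diagonal (fun i => (t i : ℂ)) - c • (star U * ρ * U) := by
    rw [← hDt]
    rw [Matrix.mul_sub, Matrix.sub_mul, Matrix.mul_smul, Matrix.smul_mul]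
  -- diag entries of rotated ρ
  have hdiag : ∀ i, (star U * ρ * U) i i = ((∑ j, a j * d i j : ℝ) : ℂ) := by
    intro i
    rw [hPρ, diag_entry_rot]
  -- properties for master
  have ht0 : ∀ i, 0 ≤ t i := fun i => hT.eigenvalues_nonneg i
  have ha0 : ∀ j, 0 ≤ a j := fun j => hρ.eigenvalues_nonneg j
  have hd0 : ∀ i j, 0 ≤ d i j := fun i j => Complex.normSq_nonneg _
  have H1 : ∀ j, ∑ i, d i j = 1 := by
    intro j
    have hWW : star W * W = 1 := by
      rw [hW, StarMul.star_mul, star_star, Matrix.mul_assoc, ← Matrix.mul_assoc U,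
        hUU, Matrix.one_mul, hVV']
    have := congrArg (fun M => M j j) hWW
    simp only [Matrix.mul_apply, Matrix.one_apply_eq] at this
    have h2 : ∑ i, ((d i j : ℝ) : ℂ) = 1 := by
      rw [← this]
      refine Finset.sum_congr rfl fun i _ => ?_
      rw [Matrix.star_apply, Complex.star_def, hd, mul_comm, Complex.mul_conj]
    exact_mod_cast h2
  have H2 : ∀ i, ∑ j, (c * a j) * d i j ≤ t i := by
    intro i
    have hnn := psd_diag_entry_re_nonneg (hsplit ▸ hrot) i
    have hre : ((diagonal (fun i => (t i : ℂ)) - c • (star U * ρ * U)) i i).re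
        = t i - c * (∑ j, a j * d i j) := by
      rw [Matrix.sub_apply, Matrix.diagonal_apply_eq, Matrix.smul_apply, hdiag i]
      simp [Complex.real_smul]
    rw [hre] at hnn
    calc ∑ j, (c * a j) * d i j = c * ∑ j, a j * d i j := by
          rw [Finset.mul_sum]; exact Finset.sum_congr rfl fun j _ => by ring
      _ ≤ t i := by linarith
  have H3 : ∀ j, (c * a j) * (∑ i, if 0 < t i then d i j / t i else 0) ≤ 1 := by
    intro j
    set K : ℝ := ∑ i, if 0 < t i then d i j / t i else 0 with hK
    have hK0 : 0 ≤ K := Finset.sum_nonneg fun i _ => by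
      split
      · exact div_nonneg (hd0 i j) (ht0 i)
      · exact le_rfl
    set g : n → ℝ := fun i => if 0 < t i then (t i)⁻¹ else 0 with hg
    set w : n → ℂ := fun i => (g i : ℂ) * W i j with hwv
    have hnsq : ∀ i, Complex.normSq (w i) = (g i)^2 * d i j := by
      intro i
      rw [hwv]
      simp only [Complex.normSq_mul, Complex.normSq_ofReal, hd]
      ring
    -- quadratic form of diagonal t at w
    have hqT : star w ⬝ᵥ (diagonal (fun i => (t i : ℂ)) *ᵥ w) = (K : ℂ) := by
      rw [quad_diag]
      have hterm : ∀ i, (t i : ℂ) * (Complex.normSq (w i) : ℂ)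
          = ((if 0 < t i then d i j / t i else 0 : ℝ) : ℂ) := by
        intro i
        rw [hnsq i]
        norm_cast
        simp only [hg]
        by_cases hpos : 0 < t i
        · rw [if_pos hpos, if_pos hpos]
          field_simp
        · rw [if_neg hpos, if_neg hpos]
          ring
      rw [Finset.sum_congr rfl fun i _ => hterm i, hK]
      norm_cast
    -- (Wᴴ *ᵥ w) j = K
    have hyj : (Wᴴ *ᵥ w) j = (K : ℂ) := by
      rw [Matrix.mulVec, hK]
      simp only [Matrix.conjTranspose_apply, dotProduct]
      have hterm : ∀ i, star (W i j) * w i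
          = ((if 0 < t i then d i j / t i else 0 : ℝ) : ℂ) := by
        intro i
        rw [hwv, Complex.star_def]
        have heq : (starRingEnd ℂ) (W i j) * ((g i : ℂ) * W i j)
            = (g i : ℂ) * (W i j * (starRingEnd ℂ) (W i j)) := by ring
        rw [heq, Complex.mul_conj]
        rw [show Complex.normSq (W i j) = d i j from rfl]
        norm_cast
        simp only [hg]
        by_cases hpos : 0 < t i
        · rw [if_pos hpos, if_pos hpos]
          field_simp
        · rw [if_neg hpos, if_neg hpos]
          ring
      rw [Finset.sum_congr rfl fun i _ => hterm i]
      norm_cast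
    -- quadratic form of rotated ρ at w
    have hqρ : star w ⬝ᵥ ((star U * ρ * U) *ᵥ w)
        = ((∑ j', a j' * Complex.normSq ((Wᴴ *ᵥ w) j') : ℝ) : ℂ) := by
      rw [hPρ, quad_rot]
      push_cast
      rfl
    have hlow : a j * K^2 ≤ ∑ j', a j' * Complex.normSq ((Wᴴ *ᵥ w) j') := by
      have h := Finset.single_le_sum
        (f := fun j' => a j' * Complex.normSq ((Wᴴ *ᵥ w) j'))
        (fun j' _ => mul_nonneg (ha0 j') (Complex.normSq_nonneg _)) (Finset.mem_univ j)
      simp only [hyj, Complex.normSq_ofReal] at h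
      calc a j * K^2 = a j * (K * K) := by ring
        _ ≤ _ := h
    -- PSD at w
    have hpsd := (hsplit ▸ hrot).re_dotProduct_nonneg w
    have hval : RCLike.re (star w ⬝ᵥ ((diagonal (fun i => (t i : ℂ))
          - c • (star U * ρ * U)) *ᵥ w))
        = K - c * (∑ j', a j' * Complex.normSq ((Wᴴ *ᵥ w) j')) := by
      rw [Matrix.sub_mulVec, dotProduct_sub, hqT]
      have : (c • (star U * ρ * U)) *ᵥ w = (c:ℂ) • ((star U * ρ * U) *ᵥ w) := by
        rw [show c • (star U * ρ * U) = (c:ℂ) • (star U * ρ * U) by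
          ext i' j'; simp [Complex.real_smul]]
        rw [smul_mulVec]
      rw [this, dotProduct_smul, hqρ, smul_eq_mul]
      push_cast
      simp
    rw [hval] at hpsd
    have hineq : c * (a j * K^2) ≤ K := by
      have h1 : c * (a j * K^2) ≤ c * (∑ j', a j' * Complex.normSq ((Wᴴ *ᵥ w) j')) :=
        mul_le_mul_of_nonneg_left hlow hc
      linarith
    rcases eq_or_lt_of_le hK0 with hK0' | hKpos
    · rw [← hK0', mul_zero]; exact zero_le_one
    · have := (mul_le_mul_iff_of_pos_right hKpos).mpr (le_refl K)
      nlinarith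
  have hmaster := master t (fun j => c * a j) d ht0
    (fun j => mul_nonneg hc (ha0 j)) hd0 H1 H2 H3
  calc ∑ i, c * ((star U * ρ * U) i i).re * (- Real.log (t i))
      = ∑ i, (∑ j, (c * a j) * d i j) * (- Real.log (t i)) := by
        refine Finset.sum_congr rfl fun i _ => ?_
        rw [hdiag i]
        have : ((((∑ j, a j * d i j : ℝ)) : ℂ)).re = ∑ j, a j * d i j := by
          exact Complex.ofReal_re _
        rw [this]
        rw [show ∑ j, (c * a j) * d i j = c * ∑ j, a j * d i j by
          rw [Finset.mul_sum]; exact Finset.sum_congr rfl fun j _ => by ring]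
    _ ≤ ∑ j, Real.negMulLog (c * a j) := hmaster

end AuxiliaryLemmas

/-- The von Neumann entropy, extended to the cone of positive trace-class operators by
`H(ρ) = Tr η(ρ) − η(Tr ρ)` with `η(x) = −x log x` (computed spectrally). -/
def vnEnt {n : Type*} [Fintype n] [DecidableEq n] (ρ : Matrix n n ℂ) : ℝ :=
  if h : ρ.IsHermitian then
    (∑ i, Real.negMulLog (h.eigenvalues i)) - Real.negMulLog (∑ i, h.eigenvalues i)
  else 0

/-- A state (density operator): positive semidefinite with unit trace. -/
def IsState {n : Type*} [Fintype n] (ρ : Matrix n n ℂ) : Prop :=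
  ρ.PosSemidef ∧ ρ.trace = 1

/-- Almost-concavity of the von Neumann entropy:
`H(λρ + (1−λ)σ) ≤ λH(ρ) + (1−λ)H(σ) + max{Tr ρ, Tr σ}·h₂(λ)`. -/
theorem vnEnt_convex_combination_le {n : Type*} [Fintype n] [DecidableEq n]
    (ρ σ : Matrix n n ℂ) (hρ : ρ.PosSemidef) (hσ : σ.PosSemidef)
    (l : ℝ) (h0 : 0 ≤ l) (h1 : l ≤ 1) :
    vnEnt (l • ρ + (1 - l) • σ)
      ≤ l * vnEnt ρ + (1 - l) * vnEnt σ + max ρ.trace.re σ.trace.re * Real.binEntropy l := by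
  have h0' : (0:ℝ) ≤ 1 - l := by linarith
  set T : Matrix n n ℂ := l • ρ + (1 - l) • σ with hTdef
  have hT : T.PosSemidef := psd_add (psd_smul hρ h0) (psd_smul hσ h0')
  have hle1 : (T - l • ρ).PosSemidef := by
    have h : T - l • ρ = (1 - l) • σ := by rw [hTdef]; abel
    rw [h]; exact psd_smul hσ h0'
  have hle2 : (T - (1 - l) • σ).PosSemidef := by
    have h : T - (1 - l) • σ = l • ρ := by rw [hTdef]; abel
    rw [h]; exact psd_smul hρ h0
  set U : Matrix n n ℂ := (hT.1.eigenvectorUnitary : Matrix n n ℂ) with hU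
  set t : n → ℝ := hT.1.eigenvalues with htdef
  set a : n → ℝ := hρ.1.eigenvalues with hadef
  set b : n → ℝ := hσ.1.eigenvalues with hbdef
  set R : n → ℝ := fun i => ((star U * ρ * U) i i).re with hRdef
  set S : n → ℝ := fun i => ((star U * σ * U) i i).re with hSdef
  have hDt : star U * T * U = diagonal (fun i => (t i : ℂ)) := by
    have := hT.1.spectral_theorem
    rw [Unitary.conjStarAlgAut_apply, ← hU] at this
    have hUU' : star U * U = 1 := Matrix.mem_unitaryGroup_iff'.mp hT.1.eigenvectorUnitary.2
    conv_lhs => rw [this]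
    simp only [Matrix.mul_assoc, hUU', Matrix.mul_one]
    rw [← Matrix.mul_assoc, hUU', Matrix.one_mul]
    rfl
  have hsplitT : star U * T * U = l • (star U * ρ * U) + (1 - l) • (star U * σ * U) := by
    rw [hTdef, Matrix.mul_add, Matrix.add_mul, Matrix.mul_smul, Matrix.smul_mul,
      Matrix.mul_smul, Matrix.smul_mul]
  have hti : ∀ i, t i = l * R i + (1 - l) * S i := by
    intro i
    have h := congrArg (fun M : Matrix n n ℂ => (M i i).re) (hDt.symm.trans hsplitT)
    simpa [Matrix.add_apply, Matrix.smul_apply, Matrix.diagonal_apply_eq, Complex.smul_re]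
      using h
  -- entropy sum bound
  have key : ∑ i, Real.negMulLog (t i)
      ≤ ∑ j, Real.negMulLog (l * a j) + ∑ j, Real.negMulLog ((1 - l) * b j) := by
    have e1 : ∀ i, Real.negMulLog (t i)
        = l * R i * (- Real.log (t i)) + (1 - l) * S i * (- Real.log (t i)) := by
      intro i
      rw [Real.negMulLog]
      nth_rewrite 1 [hti i]
      ring
    rw [Finset.sum_congr rfl fun i _ => e1 i, Finset.sum_add_distrib]
    exact add_le_add (KL hρ hT h0 hle1) (KL hσ hT h0' hle2)
  -- trace identities
  have hP : ρ.trace.re = ∑ j, a j := by rw [trace_eq_sum_eigen hρ.1, Complex.ofReal_re]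
  have hQ : σ.trace.re = ∑ j, b j := by rw [trace_eq_sum_eigen hσ.1, Complex.ofReal_re]
  have hTt : ∑ i, t i = l * ρ.trace.re + (1 - l) * σ.trace.re := by
    have h := trace_eq_sum_eigen hT.1
    have h2 : T.trace = l • ρ.trace + (1 - l) • σ.trace := by
      rw [hTdef, Matrix.trace_add, Matrix.trace_smul, Matrix.trace_smul]
    rw [h2] at h
    have := congrArg Complex.re h
    simpa [Complex.smul_re, Complex.ofReal_re] using this.symm
  have hP0 : 0 ≤ ρ.trace.re := by
    rw [hP]; exact Finset.sum_nonneg fun j _ => hρ.eigenvalues_nonneg j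
  have hQ0 : 0 ≤ σ.trace.re := by
    rw [hQ]; exact Finset.sum_nonneg fun j _ => hσ.eigenvalues_nonneg j
  -- expansion of scaled entropies
  have hexp1 : ∑ j, Real.negMulLog (l * a j)
      = l * ∑ j, Real.negMulLog (a j) + Real.negMulLog l * ρ.trace.re := by
    have e : ∀ j, Real.negMulLog (l * a j)
        = l * Real.negMulLog (a j) + Real.negMulLog l * a j := by
      intro j; rw [Real.negMulLog_mul]; ring
    rw [hP, Finset.sum_congr rfl fun j _ => e j, Finset.sum_add_distrib, ← Finset.mul_sum,
      ← Finset.mul_sum]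
  have hexp2 : ∑ j, Real.negMulLog ((1 - l) * b j)
      = (1 - l) * ∑ j, Real.negMulLog (b j) + Real.negMulLog (1 - l) * σ.trace.re := by
    have e : ∀ j, Real.negMulLog ((1 - l) * b j)
        = (1 - l) * Real.negMulLog (b j) + Real.negMulLog (1 - l) * b j := by
      intro j; rw [Real.negMulLog_mul]; ring
    rw [hQ, Finset.sum_congr rfl fun j _ => e j, Finset.sum_add_distrib, ← Finset.mul_sum,
      ← Finset.mul_sum]
  -- concavity of negMulLog at the traces
  have hconc : l * Real.negMulLog ρ.trace.re + (1 - l) * Real.negMulLog σ.trace.re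
      ≤ Real.negMulLog (l * ρ.trace.re + (1 - l) * σ.trace.re) := by
    have := Real.concaveOn_negMulLog.2 (Set.mem_Ici.mpr hP0) (Set.mem_Ici.mpr hQ0)
      h0 h0' (by ring)
    simpa [smul_eq_mul] using this
  have hnl : 0 ≤ Real.negMulLog l := Real.negMulLog_nonneg h0 h1
  have hnl' : 0 ≤ Real.negMulLog (1 - l) := Real.negMulLog_nonneg h0' (by linarith)
  have hmax1 : Real.negMulLog l * ρ.trace.re
      ≤ Real.negMulLog l * max ρ.trace.re σ.trace.re :=
    mul_le_mul_of_nonneg_left (le_max_left _ _) hnl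
  have hmax2 : Real.negMulLog (1 - l) * σ.trace.re
      ≤ Real.negMulLog (1 - l) * max ρ.trace.re σ.trace.re :=
    mul_le_mul_of_nonneg_left (le_max_right _ _) hnl'
  have hbin : Real.binEntropy l = Real.negMulLog l + Real.negMulLog (1 - l) :=
    Real.binEntropy_eq_negMulLog_add_negMulLog_one_sub l
  -- unfold vnEnt
  rw [vnEnt, vnEnt, vnEnt, dif_pos hT.1, dif_pos hρ.1, dif_pos hσ.1]
  rw [← htdef, ← hadef, ← hbdef, hTt, hbin,
    show (∑ i, a i) = ρ.trace.re from hP.symm, show (∑ i, b i) = σ.trace.re from hQ.symm]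
  linarith [key, hexp1, hexp2, hconc, hmax1, hmax2]
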